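/- arXiv:1704.00461 — 3 statements merged into one kernel-verified Lean document; each statement's English description precedes it below -/
import Mathlib

section
/- Let C and D be cycles in the plane grid graph on ℤ² sharing more than one vertex, and suppose D contains at least one edge in the exterior of C. Then the merged cycle E (the unique minimal cycle whose interior contains the interiors of both C and D) contains at least one edge of D lying in the exterior of C. -/
/-- The unit-square grid graph on `ℤ²`: vertices are lattice points, edges join
points at distance `1`. -/
def gridGraph : SimpleGraph (ℤ × ℤ) where
  Adj u v := (u.1 - v.1).natAbs + (u.2 - v.2).natAbs = 1
  symm := by
    constructor
    intro u v h
    omega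
  loopless := by
    constructor
    intro u h
    simp at h

/-- Embedding of lattice points into the plane. -/
noncomputable def toPlane (z : ℤ × ℤ) : ℝ × ℝ := ((z.1 : ℝ), (z.2 : ℝ))

/-- The closed segment in the plane corresponding to an edge. -/
noncomputable def edgeSeg (e : Sym2 (ℤ × ℤ)) : Set (ℝ × ℝ) :=
  Sym2.lift ⟨fun a b => segment ℝ (toPlane a) (toPlane b),
    fun a b => segment_symm ℝ (toPlane a) (toPlane b)⟩ e

/-- The plane curve traced by (the edges of) a walk. -/
noncomputable def walkCurve {u v : ℤ × ℤ} (w : gridGraph.Walk u v) : Set (ℝ × ℝ) :=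
  ⋃ e ∈ w.edges, edgeSeg e

/-- The interior region of a (closed) walk: points off the curve whose connected
component in the complement of the curve is bounded. -/
noncomputable def cycInterior {u v : ℤ × ℤ} (w : gridGraph.Walk u v) : Set (ℝ × ℝ) :=
  {p | p ∉ walkCurve w ∧ Bornology.IsBounded (connectedComponentIn (walkCurve w)ᶜ p)}

/-- The closed region bounded by a cycle: its interior together with the curve. -/
noncomputable def closedRegion {u v : ℤ × ℤ} (w : gridGraph.Walk u v) : Set (ℝ × ℝ) :=
  cycInterior w ∪ walkCurve w

/-- The closed unit square (tile) with lower-left corner `z`. -/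
noncomputable def tileSquare (z : ℤ × ℤ) : Set (ℝ × ℝ) :=
  Set.Icc (z.1 : ℝ) ((z.1 : ℝ) + 1) ×ˢ Set.Icc (z.2 : ℝ) ((z.2 : ℝ) + 1)

/-- The tiles having the edge `e` on their boundary. -/
noncomputable def tilesOf (e : Sym2 (ℤ × ℤ)) : Set (ℤ × ℤ) :=
  {z | edgeSeg e ⊆ frontier (tileSquare z)}

/-- An edge lies in the interior of a cycle if both unit squares containing it as a
boundary edge are contained in the closed region bounded by the cycle. -/
noncomputable def edgeInInterior {u v : ℤ × ℤ} (w : gridGraph.Walk u v) (e : Sym2 (ℤ × ℤ)) : Prop :=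
  ∀ z ∈ tilesOf e, tileSquare z ⊆ closedRegion w

/-- An edge lies in the exterior of a cycle if both unit squares containing it lie in
the closed exterior (the complement of the open interior). -/
noncomputable def edgeInExterior {u v : ℤ × ℤ} (w : gridGraph.Walk u v) (e : Sym2 (ℤ × ℤ)) : Prop :=
  ∀ z ∈ tilesOf e, tileSquare z ⊆ (cycInterior w)ᶜ

/-- A square lies in the interior of a cycle. -/
noncomputable def squareInside {u v : ℤ × ℤ} (w : gridGraph.Walk u v) (z : ℤ × ℤ) : Prop :=
  tileSquare z ⊆ closedRegion w

/-- A square lies in the exterior of a cycle. -/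
noncomputable def squareOutside {u v : ℤ × ℤ} (w : gridGraph.Walk u v) (z : ℤ × ℤ) : Prop :=
  tileSquare z ⊆ (cycInterior w)ᶜ

/-- The characteristic property of the merged cycle `E` of two cycles `C` and `D`:
`E` consists only of edges of `C` and `D`, the closed region bounded by `E`
contains the closed regions bounded by `C` and by `D`, and every edge of `C` or
`D` either lies on `E` or lies in the interior region of `E`. -/
noncomputable def mergedProp {c d x : ℤ × ℤ} (C : gridGraph.Walk c c)
    (D : gridGraph.Walk d d) (E : gridGraph.Walk x x) : Prop :=
  (∀ e ∈ E.edges, e ∈ C.edges ∨ e ∈ D.edges) ∧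
  closedRegion C ⊆ closedRegion E ∧ closedRegion D ⊆ closedRegion E ∧
  (∀ e, (e ∈ C.edges ∨ e ∈ D.edges) → (e ∈ E.edges ∨ edgeInInterior E e))

open Set Bornology

lemma mce_edgeSeg_mk (a b : ℤ × ℤ) :
    edgeSeg s(a, b) = segment ℝ (toPlane a) (toPlane b) := rfl

lemma mce_edgeSeg_compact (e : Sym2 (ℤ × ℤ)) : IsCompact (edgeSeg e) := by
  induction e using Sym2.ind with
  | _ a b =>
    rw [mce_edgeSeg_mk, segment_eq_image]
    exact isCompact_Icc.image (by continuity)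

lemma mce_walkCurve_compact {u v : ℤ × ℤ} (w : gridGraph.Walk u v) :
    IsCompact (walkCurve w) :=
  (w.edges.finite_toSet).isCompact_biUnion (fun e _ => mce_edgeSeg_compact e)

lemma mce_curve_coord {u v : ℤ × ℤ} {w : gridGraph.Walk u v} {q : ℝ × ℝ}
    (hq : q ∈ walkCurve w) : (∃ n : ℤ, q.1 = (n : ℝ)) ∨ (∃ n : ℤ, q.2 = (n : ℝ)) := by
  simp only [walkCurve, Set.mem_iUnion] at hq
  obtain ⟨e, he, hqe⟩ := hq
  induction e using Sym2.ind with
  | _ a b =>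
    have hadj : (a.1 - b.1).natAbs + (a.2 - b.2).natAbs = 1 := w.adj_of_mem_edges he
    rw [mce_edgeSeg_mk] at hqe
    obtain ⟨s, t, hs, ht, hst, rfl⟩ := hqe
    have h1 : a.1 = b.1 ∨ a.2 = b.2 := by omega
    rcases h1 with h | h
    · left
      refine ⟨b.1, ?_⟩
      show s * (a.1 : ℝ) + t * (b.1 : ℝ) = (b.1 : ℝ)
      rw [h]
      have : s * (b.1 : ℝ) + t * (b.1 : ℝ) = (s + t) * (b.1 : ℝ) := by ring
      rw [this, hst, one_mul]
    · right
      refine ⟨b.2, ?_⟩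
      show s * (a.2 : ℝ) + t * (b.2 : ℝ) = (b.2 : ℝ)
      rw [h]
      have : s * (b.2 : ℝ) + t * (b.2 : ℝ) = (s + t) * (b.2 : ℝ) := by ring
      rw [this, hst, one_mul]

lemma mce_tile_interior (z : ℤ × ℤ) :
    interior (tileSquare z) = Ioo (z.1 : ℝ) ((z.1 : ℝ) + 1) ×ˢ Ioo (z.2 : ℝ) ((z.2 : ℝ) + 1) := by
  rw [tileSquare, interior_prod_eq, interior_Icc, interior_Icc]

lemma mce_tile_closed (z : ℤ × ℤ) : IsClosed (tileSquare z) :=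
  (isClosed_Icc).prod isClosed_Icc

lemma mce_tile_closure (z : ℤ × ℤ) : closure (interior (tileSquare z)) = tileSquare z := by
  rw [mce_tile_interior, closure_prod_eq,
    closure_Ioo (by norm_num : (z.1 : ℝ) ≠ (z.1 : ℝ) + 1),
    closure_Ioo (by norm_num : (z.2 : ℝ) ≠ (z.2 : ℝ) + 1), tileSquare]

lemma mce_no_int {m : ℤ} {x : ℝ} (h : x ∈ Ioo (m : ℝ) ((m : ℝ) + 1)) (n : ℤ) : x ≠ (n : ℝ) := by
  rintro rfl
  obtain ⟨h1, h2⟩ := h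
  have hn1 : m < n := by exact_mod_cast h1
  have hn2 : (n : ℝ) < ((m + 1 : ℤ) : ℝ) := by push_cast; linarith
  have : n < m + 1 := by exact_mod_cast hn2
  omega

lemma mce_tileint_disjoint {u v : ℤ × ℤ} (w : gridGraph.Walk u v) (z : ℤ × ℤ) :
    interior (tileSquare z) ⊆ (walkCurve w)ᶜ := by
  intro q hq hcurve
  rw [mce_tile_interior] at hq
  rcases mce_curve_coord hcurve with ⟨n, hn⟩ | ⟨n, hn⟩
  · exact mce_no_int hq.1 n hn
  · exact mce_no_int hq.2 n hn

lemma mce_unbounded {s : Set (ℝ × ℝ)} (h : ∀ r : ℝ, ∃ x ∈ s, r < ‖x‖) : ¬ IsBounded s := by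
  intro hb
  obtain ⟨r, hr⟩ := (Metric.isBounded_iff_subset_closedBall 0).mp hb
  obtain ⟨x, hx, hxr⟩ := h r
  have := hr hx
  rw [Metric.mem_closedBall, dist_zero_right] at this
  linarith

lemma mce_not_mem_cycInterior {u v : ℤ × ℤ} (w : gridGraph.Walk u v) {p : ℝ × ℝ}
    {H : Set (ℝ × ℝ)} (hconv : Convex ℝ H) (hp : p ∈ H) (hH : H ⊆ (walkCurve w)ᶜ)
    (hub : ¬ IsBounded H) : p ∉ cycInterior w := by
  rintro ⟨hpc, hb⟩
  exact hub (hb.subset (hconv.isPreconnected.subset_connectedComponentIn hp hH))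

lemma mce_halfplane_escape {u v : ℤ × ℤ} (w : gridGraph.Walk u v) {M : ℝ}
    (hM : ∀ x ∈ walkCurve w, ‖x‖ ≤ M) (f : ℝ × ℝ →ₗ[ℝ] ℝ)
    (hf : ∀ x : ℝ × ℝ, f x ≤ ‖x‖) (hub : ¬ IsBounded {x : ℝ × ℝ | M < f x})
    {q : ℝ × ℝ} (hq : M < f q) : q ∉ cycInterior w := by
  refine mce_not_mem_cycInterior w (convex_halfSpace_gt f.isLinear M) hq ?_ hub
  intro x hx hxc
  exact absurd ((hf x).trans (hM x hxc)) (not_le.mpr hx)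

lemma mce_norm_mk1 (a : ℝ) : ‖((a, 0) : ℝ × ℝ)‖ = |a| := by
  rw [Prod.norm_def]; simp [Real.norm_eq_abs, abs_nonneg]

lemma mce_norm_mk2 (a : ℝ) : ‖((0, a) : ℝ × ℝ)‖ = |a| := by
  rw [Prod.norm_def]; simp [Real.norm_eq_abs, abs_nonneg]

lemma mce_cycInterior_far {u v : ℤ × ℤ} (w : gridGraph.Walk u v) {M : ℝ}
    (hM : ∀ x ∈ walkCurve w, ‖x‖ ≤ M) {q : ℝ × ℝ} (hq : M < ‖q‖) :
    q ∉ cycInterior w := by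
  rw [Prod.norm_def, lt_max_iff, Real.norm_eq_abs, Real.norm_eq_abs, lt_abs, lt_abs] at hq
  rcases hq with (h | h) | (h | h)
  · refine mce_halfplane_escape w hM (LinearMap.fst ℝ ℝ ℝ)
      (fun x => (le_abs_self _).trans ((Real.norm_eq_abs _) ▸ norm_fst_le x)) ?_ h
    refine mce_unbounded (fun r => ⟨(max M r + 1, 0), ?_, ?_⟩)
    · simp only [Set.mem_setOf_eq, LinearMap.fst_apply]
      linarith [le_max_left M r]
    · rw [mce_norm_mk1]
      linarith [le_abs_self (max M r + 1), le_max_right M r]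
  · refine mce_halfplane_escape w hM (-(LinearMap.fst ℝ ℝ ℝ))
      (fun x => ?_) ?_ (by simpa using h)
    · simp only [LinearMap.neg_apply, LinearMap.fst_apply]
      exact (neg_le_abs _).trans ((Real.norm_eq_abs _) ▸ norm_fst_le x)
    refine mce_unbounded (fun r => ⟨(-(max M r + 1), 0), ?_, ?_⟩)
    · simp only [Set.mem_setOf_eq, LinearMap.neg_apply, LinearMap.fst_apply, neg_neg]
      linarith [le_max_left M r]
    · rw [mce_norm_mk1, abs_neg]
      linarith [le_abs_self (max M r + 1), le_max_right M r]
  · refine mce_halfplane_escape w hM (LinearMap.snd ℝ ℝ ℝ)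
      (fun x => (le_abs_self _).trans ((Real.norm_eq_abs _) ▸ norm_snd_le x)) ?_ h
    refine mce_unbounded (fun r => ⟨(0, max M r + 1), ?_, ?_⟩)
    · simp only [Set.mem_setOf_eq, LinearMap.snd_apply]
      linarith [le_max_left M r]
    · rw [mce_norm_mk2]
      linarith [le_abs_self (max M r + 1), le_max_right M r]
  · refine mce_halfplane_escape w hM (-(LinearMap.snd ℝ ℝ ℝ))
      (fun x => ?_) ?_ (by simpa using h)
    · simp only [LinearMap.neg_apply, LinearMap.snd_apply]
      exact (neg_le_abs _).trans ((Real.norm_eq_abs _) ▸ norm_snd_le x)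
    refine mce_unbounded (fun r => ⟨(0, -(max M r + 1)), ?_, ?_⟩)
    · simp only [Set.mem_setOf_eq, LinearMap.neg_apply, LinearMap.snd_apply, neg_neg]
      linarith [le_max_left M r]
    · rw [mce_norm_mk2, abs_neg]
      linarith [le_abs_self (max M r + 1), le_max_right M r]

lemma mce_cycInterior_isOpen {u v : ℤ × ℤ} (w : gridGraph.Walk u v) :
    IsOpen (cycInterior w) := by
  rw [isOpen_iff_forall_mem_open]
  rintro p ⟨hp, hb⟩
  refine ⟨connectedComponentIn (walkCurve w)ᶜ p, ?_,
    (mce_walkCurve_compact w).isClosed.isOpen_compl.connectedComponentIn,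
    mem_connectedComponentIn hp⟩
  intro y hy
  have h1 : y ∈ (walkCurve w)ᶜ := connectedComponentIn_subset _ _ hy
  have h2 : connectedComponentIn (walkCurve w)ᶜ p = connectedComponentIn (walkCurve w)ᶜ y :=
    connectedComponentIn_eq hy
  exact ⟨h1, h2 ▸ hb⟩

lemma mce_frontier_tile (z : ℤ × ℤ) :
    frontier (tileSquare z) = tileSquare z \ interior (tileSquare z) := by
  rw [frontier, (mce_tile_closed z).closure_eq]

lemma mce_horiz_tile (m n : ℤ) :
    segment ℝ ((m : ℝ), (n : ℝ)) ((m : ℝ) + 1, (n : ℝ)) ⊆ frontier (tileSquare (m, n)) := by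
  intro q hq
  obtain ⟨s, t, hs, ht, hst, rfl⟩ := hq
  rw [mce_frontier_tile]
  have h1 : (s • ((m : ℝ), (n : ℝ)) + t • ((m : ℝ) + 1, (n : ℝ))).1 = (m : ℝ) + t := by
    simp only [Prod.fst_add, Prod.smul_fst, smul_eq_mul, show s = 1 - t from by linarith]; ring
  have h2 : (s • ((m : ℝ), (n : ℝ)) + t • ((m : ℝ) + 1, (n : ℝ))).2 = (n : ℝ) := by
    simp only [Prod.snd_add, Prod.smul_snd, smul_eq_mul, show s = 1 - t from by linarith]; ring
  constructor
  · constructor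
    · rw [h1]; constructor <;> simp <;> linarith
    · rw [h2]; constructor <;> simp
  · rw [mce_tile_interior]
    intro hmem
    have := hmem.2
    rw [h2] at this
    exact absurd this.1 (lt_irrefl _)

lemma mce_vert_tile (m n : ℤ) :
    segment ℝ ((m : ℝ), (n : ℝ)) ((m : ℝ), (n : ℝ) + 1) ⊆ frontier (tileSquare (m, n)) := by
  intro q hq
  obtain ⟨s, t, hs, ht, hst, rfl⟩ := hq
  rw [mce_frontier_tile]
  have h1 : (s • ((m : ℝ), (n : ℝ)) + t • ((m : ℝ), (n : ℝ) + 1)).1 = (m : ℝ) := by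
    simp only [Prod.fst_add, Prod.smul_fst, smul_eq_mul, show s = 1 - t from by linarith]; ring
  have h2 : (s • ((m : ℝ), (n : ℝ)) + t • ((m : ℝ), (n : ℝ) + 1)).2 = (n : ℝ) + t := by
    simp only [Prod.snd_add, Prod.smul_snd, smul_eq_mul, show s = 1 - t from by linarith]; ring
  constructor
  · constructor
    · rw [h1]; constructor <;> simp
    · rw [h2]; constructor <;> simp <;> linarith
  · rw [mce_tile_interior]
    intro hmem
    have := hmem.1
    rw [h1] at this
    exact absurd this.1 (lt_irrefl _)

lemma mce_exists_tile {a b : ℤ × ℤ} (h : gridGraph.Adj a b) :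
    (tilesOf s(a, b)).Nonempty := by
  have hadj : (a.1 - b.1).natAbs + (a.2 - b.2).natAbs = 1 := h
  have hcases : (b = (a.1 + 1, a.2)) ∨ (a = (b.1 + 1, b.2)) ∨
      (b = (a.1, a.2 + 1)) ∨ (a = (b.1, b.2 + 1)) := by
    rcases a with ⟨a1, a2⟩; rcases b with ⟨b1, b2⟩
    simp only [Prod.mk.injEq]
    omega
  rcases hcases with h | h | h | h
  · refine ⟨(a.1, a.2), ?_⟩
    show edgeSeg _ ⊆ _
    rw [mce_edgeSeg_mk]
    have : toPlane b = ((a.1 : ℝ) + 1, (a.2 : ℝ)) := by rw [h]; simp [toPlane]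
    rw [this]
    exact mce_horiz_tile a.1 a.2
  · refine ⟨(b.1, b.2), ?_⟩
    show edgeSeg _ ⊆ _
    rw [Sym2.eq_swap, mce_edgeSeg_mk]
    have : toPlane a = ((b.1 : ℝ) + 1, (b.2 : ℝ)) := by rw [h]; simp [toPlane]
    rw [this]
    exact mce_horiz_tile b.1 b.2
  · refine ⟨(a.1, a.2), ?_⟩
    show edgeSeg _ ⊆ _
    rw [mce_edgeSeg_mk]
    have : toPlane b = ((a.1 : ℝ), (a.2 : ℝ) + 1) := by rw [h]; simp [toPlane]
    rw [this]
    exact mce_vert_tile a.1 a.2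
  · refine ⟨(b.1, b.2), ?_⟩
    show edgeSeg _ ⊆ _
    rw [Sym2.eq_swap, mce_edgeSeg_mk]
    have : toPlane a = ((b.1 : ℝ), (b.2 : ℝ) + 1) := by rw [h]; simp [toPlane]
    rw [this]
    exact mce_vert_tile b.1 b.2

lemma mce_edges_tile {u v : ℤ × ℤ} (w : gridGraph.Walk u v) (e : Sym2 (ℤ × ℤ))
    (he : e ∈ w.edges) : (tilesOf e).Nonempty := by
  induction e using Sym2.ind with
  | _ a b => exact mce_exists_tile (w.adj_of_mem_edges he)


/-- If the cycle `D` contains an edge in the exterior of the cycle `C` (the two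
cycles sharing more than one vertex), then the merged cycle `E` contains at
least one edge of `D` lying in the exterior of `C`. -/
theorem merged_cycle_contains_exterior_edge (c d x : ℤ × ℤ)
    (C : gridGraph.Walk c c) (D : gridGraph.Walk d d) (E : gridGraph.Walk x x)
    (hC : C.IsCycle) (hD : D.IsCycle)
    (hshare : ∃ a b : ℤ × ℤ, a ≠ b ∧ a ∈ C.support ∧ a ∈ D.support ∧
      b ∈ C.support ∧ b ∈ D.support)
    (hext : ∃ e ∈ D.edges, edgeInExterior C e)
    (hE : E.IsCycle) (hmerge : mergedProp C D E) :
    ∃ e ∈ D.edges, e ∈ E.edges ∧ edgeInExterior C e := by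
  obtain ⟨e, heD, heExt⟩ := hext
  obtain ⟨hEsub, hCE, hDE, hEdge⟩ := hmerge
  rcases hEdge e (Or.inr heD) with heE | heInt
  · exact ⟨e, heD, heE, heExt⟩
  -- the hard case: e lies in the interior of E
  obtain ⟨z0, hz0⟩ := mce_edges_tile D e heD
  have hTileE : tileSquare z0 ⊆ closedRegion E := heInt z0 hz0
  have hTileC : tileSquare z0 ⊆ (cycInterior C)ᶜ := heExt z0 hz0
  -- the center of the tile
  set p : ℝ × ℝ := ((z0.1 : ℝ) + 1/2, (z0.2 : ℝ) + 1/2) with hp_def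
  have hpS : p ∈ interior (tileSquare z0) := by
    rw [mce_tile_interior]
    constructor <;> constructor <;> simp [hp_def] <;> norm_num
  have hpT : p ∈ tileSquare z0 := interior_subset hpS
  have hpNotCurveC : p ∉ walkCurve C := mce_tileint_disjoint C z0 hpS
  have hpNotCurveE : p ∉ walkCurve E := mce_tileint_disjoint E z0 hpS
  have hpIntE : p ∈ cycInterior E := by
    rcases hTileE hpT with h | h
    · exact h
    · exact absurd h hpNotCurveE
  have hpNotIntC : p ∉ cycInterior C := hTileC hpT
  set U : Set (ℝ × ℝ) := connectedComponentIn (walkCurve C)ᶜ p with hU_def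
  have hUub : ¬ IsBounded U := fun hb => hpNotIntC ⟨hpNotCurveC, hb⟩
  have hUopen : IsOpen U :=
    (mce_walkCurve_compact C).isClosed.isOpen_compl.connectedComponentIn
  have hUconn : IsConnected U := isConnected_connectedComponentIn_iff.mpr hpNotCurveC
  have hUsub : U ⊆ (walkCurve C)ᶜ := connectedComponentIn_subset _ _
  have hpU : p ∈ U := mem_connectedComponentIn hpNotCurveC
  have hUnoInt : ∀ y ∈ U, y ∉ cycInterior C := by
    rintro y hy ⟨hyc, hyb⟩
    have heq : U = connectedComponentIn (walkCurve C)ᶜ y := connectedComponentIn_eq hy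
    exact hUub (heq ▸ hyb)
  -- a bound for the curve of E
  obtain ⟨M, hM'⟩ := (Metric.isBounded_iff_subset_closedBall 0).mp
    (mce_walkCurve_compact E).isBounded
  have hM : ∀ y ∈ walkCurve E, ‖y‖ ≤ M := by
    intro y hy
    have := hM' hy
    rwa [Metric.mem_closedBall, dist_zero_right] at this
  -- a far point q in U
  obtain ⟨q, hqU, hqM⟩ : ∃ q ∈ U, M < ‖q‖ := by
    by_contra hno
    push_neg at hno
    exact hUub ((Metric.isBounded_closedBall (x := (0 : ℝ × ℝ)) (r := M)).subset
      (fun y hy => by rw [Metric.mem_closedBall, dist_zero_right]; exact hno y hy))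
  have hqNotCurveE : q ∉ walkCurve E := fun h => absurd (hM q h) (not_le.mpr hqM)
  have hqNotIntE : q ∉ cycInterior E := mce_cycInterior_far E hM hqM
  -- a path from p to q inside U
  have hpath : IsPathConnected U := (hUopen.isConnected_iff_isPathConnected).mp hUconn
  obtain ⟨γ, hγ⟩ := hpath.joinedIn p hpU q hqU
  -- the path must cross the curve of E
  have hcross : ∃ t, γ t ∈ walkCurve E := by
    by_contra hno
    push_neg at hno
    have himg : Set.range γ ⊆ (walkCurve E)ᶜ := by
      rintro y ⟨t, rfl⟩; exact hno t
    have hconn : IsPreconnected (Set.range γ) :=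
      (isConnected_range γ.continuous).isPreconnected
    have hsub : Set.range γ ⊆ connectedComponentIn (walkCurve E)ᶜ p :=
      hconn.subset_connectedComponentIn ⟨0, γ.source⟩ himg
    have hqmem : q ∈ connectedComponentIn (walkCurve E)ᶜ p := hsub ⟨1, γ.target⟩
    have heq := connectedComponentIn_eq hqmem
    exact hqNotIntE ⟨hqNotCurveE, heq ▸ hpIntE.2⟩
  obtain ⟨t, ht⟩ := hcross
  have hxU : γ t ∈ U := hγ t
  -- the crossing point lies on an edge f of E
  have hfex : ∃ f ∈ E.edges, γ t ∈ edgeSeg f := by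
    have := ht
    simp only [walkCurve, Set.mem_iUnion] at this
    obtain ⟨f, hf, h⟩ := this
    exact ⟨f, hf, h⟩
  obtain ⟨f, hfE, hxf⟩ := hfex
  have hfnotC : f ∉ C.edges := by
    intro hfC
    have : edgeSeg f ⊆ walkCurve C := Set.subset_biUnion_of_mem hfC
    exact hUsub hxU (this hxf)
  have hfD : f ∈ D.edges := (hEsub f hfE).resolve_left hfnotC
  refine ⟨f, hfD, hfE, ?_⟩
  -- f lies in the exterior of C
  intro z hz
  have hxfr : γ t ∈ frontier (tileSquare z) := hz hxf
  set S : Set (ℝ × ℝ) := interior (tileSquare z) with hS_def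
  have hSsub : S ⊆ (walkCurve C)ᶜ := mce_tileint_disjoint C z
  have hSconn : IsPreconnected S := by
    rw [hS_def, mce_tile_interior]
    exact ((convex_Ioo _ _).prod (convex_Ioo _ _)).isPreconnected
  have hxcl : γ t ∈ closure S := by
    rw [hS_def, mce_tile_closure]
    exact ((mce_tile_closed z).closure_eq ▸ hxfr.1 : γ t ∈ tileSquare z)
  obtain ⟨s0, hs0U, hs0S⟩ : (U ∩ S).Nonempty :=
    mem_closure_iff.mp hxcl U hUopen hxU
  have hSU : S ⊆ U := by
    have h1 : S ⊆ connectedComponentIn (walkCurve C)ᶜ s0 :=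
      hSconn.subset_connectedComponentIn hs0S hSsub
    have h2 : U = connectedComponentIn (walkCurve C)ᶜ s0 := connectedComponentIn_eq hs0U
    rw [h2]; exact h1
  -- now show the whole tile avoids the interior of C
  intro y hy hyInt
  have hycl : y ∈ closure S := by
    rw [hS_def, mce_tile_closure]; exact hy
  obtain ⟨y', hy'Int, hy'S⟩ : (cycInterior C ∩ S).Nonempty :=
    mem_closure_iff.mp hycl (cycInterior C) (mce_cycInterior_isOpen C) hyInt
  exact hUnoInt y' (hSU hy'S) hy'Int
end

section
/- Let P = (e_1,…,e_k) be a path of edges in a graph in which each pair of distinct cycles from a fixed edge-disjoint family {E_i} meets in at most one vertex, and suppose vertices i_1,…,i_m form a path in the cycle-intersection graph of the family. If u is a vertex of E_{i_1} and v a vertex of E_{i_m}, then there is a path from u to v using only edges of the cycles E_{i_1},…,E_{i_m}. -/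
open SimpleGraph Walk

lemma walk_in_cycle {V : Type*} {G : SimpleGraph V} {b u v : V}
    (p : G.Walk b b) (hp : ¬ p.Nil) (hu : u ∈ p.support) (hv : v ∈ p.support) :
    ∃ w : G.Walk u v, w.edges ⊆ p.edges := by
  classical
  have hb : b ∈ p.support.tail := by
    cases p with
    | nil => exact absurd Walk.nil_nil hp
    | cons h q => simpa using q.end_mem_support
  have hvt : v ∈ p.support.tail ∨ v = u := by
    by_cases hvu : v = u
    · exact Or.inr hvu
    rw [p.support_eq_cons] at hv
    rcases List.mem_cons.mp hv with h | h
    · exact Or.inl (h ▸ hb)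
    · exact Or.inl h
  set q := p.rotate u hu with hq
  have hvq : v ∈ q.support := by
    rcases hvt with h | h
    · exact List.mem_of_mem_tail ((p.support_rotate u hu).mem_iff.mpr h)
    · exact h ▸ q.start_mem_support
  refine ⟨q.takeUntil v hvq, fun e he => ?_⟩
  exact (p.rotate_edges u hu).mem_iff.mp (q.edges_takeUntil_subset hvq he)

lemma chain_walk {V : Type*} (G : SimpleGraph V)
    (N : ℕ) (b : Fin N → V) (E : ∀ i, G.Walk (b i) (b i))
    (hcyc : ∀ i, ¬ (E i).Nil) :
    ∀ (m : ℕ) (f : Fin (m + 1) → Fin N)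
    (_ : ∀ i : Fin m, ∃ x : V,
      x ∈ (E (f i.castSucc)).support ∧ x ∈ (E (f i.succ)).support)
    (u v : V) (_ : u ∈ (E (f 0)).support) (_ : v ∈ (E (f (Fin.last m))).support),
    ∃ w : G.Walk u v, ∀ e ∈ w.edges, ∃ i, e ∈ (E (f i)).edges := by
  classical
  intro m
  induction m with
  | zero =>
    intro f hpath u v hu hv
    obtain ⟨w, hw⟩ := walk_in_cycle (E (f 0)) (hcyc _) hu hv
    exact ⟨w, fun e he => ⟨0, hw he⟩⟩
  | succ m ih =>
    intro f hpath u v hu hv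
    obtain ⟨x, hx0, hx1⟩ := hpath 0
    obtain ⟨w1, hw1⟩ := walk_in_cycle (E (f 0)) (hcyc _) hu (by simpa using hx0)
    obtain ⟨w2, hw2⟩ := ih (fun i => f i.succ)
      (fun i => by
        obtain ⟨x, h1, h2⟩ := hpath i.succ
        exact ⟨x, by simp only [Fin.succ_castSucc]; exact h1, h2⟩)
      x v (by simpa using hx1) (by simpa [Fin.succ_last] using hv)
    refine ⟨w1.append w2, fun e he => ?_⟩
    rcases List.mem_append.mp (by simpa using he) with h | h
    · exact ⟨0, by simpa using hw1 h⟩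
    · obtain ⟨i, hi⟩ := hw2 e h
      exact ⟨i.succ, hi⟩

/-- If the indices `f 0, f 1, …, f m` form a path in the cycle-intersection graph
of a family of pairwise edge-disjoint cycles `E_i` (any two sharing at most one
vertex), `u` is a vertex of the first cycle and `v` a vertex of the last, then
there is a path from `u` to `v` using only edges of the cycles
`E (f 0), …, E (f m)`. -/
theorem path_through_chain_of_cycles {V : Type*} (G : SimpleGraph V)
    (N : ℕ) (b : Fin N → V) (E : ∀ i, G.Walk (b i) (b i))
    (hcyc : ∀ i, (E i).IsCycle)
    (hedisj : ∀ i j, i ≠ j → ∀ e, e ∈ (E i).edges → e ∉ (E j).edges)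
    (hvert : ∀ i j, i ≠ j →
      Set.Subsingleton {x : V | x ∈ (E i).support ∧ x ∈ (E j).support})
    (m : ℕ) (f : Fin (m + 1) → Fin N) (hf : Function.Injective f)
    (hpath : ∀ i : Fin m, ∃ x : V,
      x ∈ (E (f i.castSucc)).support ∧ x ∈ (E (f i.succ)).support)
    (u v : V) (hu : u ∈ (E (f 0)).support) (hv : v ∈ (E (f (Fin.last m))).support) :
    ∃ w : G.Walk u v, w.IsPath ∧ ∀ e ∈ w.edges, ∃ i, e ∈ (E (f i)).edges := by
  classical
  obtain ⟨w, hw⟩ := chain_walk G N b E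
    (fun i => ((hcyc i).not_nil)) m f hpath u v hu hv
  exact ⟨w.bypass, w.bypass_isPath, fun e he => hw e (w.edges_bypass_subset he)⟩
end

section
/- In oriented bond percolation on the rectangle R = [0,m]×[0,n] (n ≥ 2), it is impossible for both an open oriented left-right crossing of R and a closed dual oriented top-bottom crossing of R to exist, where each dual edge lying in the interior of R is open iff the unique oriented lattice edge it crosses is open. -/
/-- The oriented edges of the oriented bond percolation model in the rectangle
`R = [0,m] × [0,n]`: oriented edges from `(i,j)` with `i + j` odd to
`(i+1, j±1)`, with both endvertices in `R` (which encodes the boundary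
modifications at `j = 0` and `j = n`). -/
def orEdge (m n : ℤ) (u v : ℤ × ℤ) : Prop :=
  Odd (u.1 + u.2) ∧ 0 ≤ u.1 ∧ 0 ≤ u.2 ∧ u.2 ≤ n ∧
  v.1 = u.1 + 1 ∧ v.1 ≤ m ∧ (v.2 = u.2 + 1 ∨ v.2 = u.2 - 1) ∧ 0 ≤ v.2 ∧ v.2 ≤ n

/-- A step of the dual (diamond) lattice: a unit diagonal oriented edge.  The
dual unit squares are the diamonds centred at lattice points with their four
boundary edges oriented clockwise; every oriented diagonal unit edge arises as a
clockwise boundary edge of exactly one diamond. -/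
def diagStep (u v : ℤ × ℤ) : Prop :=
  (v.1 - u.1).natAbs = 1 ∧ (v.2 - u.2).natAbs = 1

/-- The dual oriented edge `f` crosses the lattice oriented edge `e`
perpendicularly: they have the same midpoint and orthogonal directions. -/
def crossesOr (e f : (ℤ × ℤ) × (ℤ × ℤ)) : Prop :=
  e.1.1 + e.2.1 = f.1.1 + f.2.1 ∧ e.1.2 + e.2.2 = f.1.2 + f.2.2 ∧
  (e.2.1 - e.1.1) * (f.2.1 - f.1.1) + (e.2.2 - e.1.2) * (f.2.2 - f.1.2) = 0

/-- A dual oriented edge is closed iff the unique oriented lattice edge it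
crosses perpendicularly is closed. -/
def dualClosedOr (m n : ℤ) (ω : (ℤ × ℤ) × (ℤ × ℤ) → Prop)
    (f : (ℤ × ℤ) × (ℤ × ℤ)) : Prop :=
  ∃ e : (ℤ × ℤ) × (ℤ × ℤ), orEdge m n e.1 e.2 ∧ crossesOr e f ∧ ¬ ω e

private lemma signChange (s : ℕ → ℤ) : ∀ T : ℕ, 0 < s 0 → s T < 0 →
    (∀ t, t ≤ T → s t ≠ 0) → ∃ t, t < T ∧ 0 < s t ∧ s (t + 1) < 0 := by
  intro T
  induction T with
  | zero => intro h0 hT _; omega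
  | succ T ih =>
    intro h0 hT hne
    by_cases hT' : s T < 0
    · obtain ⟨t, ht, h1, h2⟩ := ih h0 hT' (fun t ht => hne t (by omega))
      exact ⟨t, by omega, h1, h2⟩
    · have hne' : s T ≠ 0 := hne T (by omega)
      exact ⟨T, by omega, by omega, hT⟩


/-- In oriented bond percolation on the rectangle `R = [0,m] × [0,n]` (`n ≥ 2`),
it is impossible for both an open oriented left-right crossing of `R` and a
closed dual oriented top-bottom crossing of `R` to exist. -/
theorem no_open_oriented_LR_and_closed_dual_oriented_TB (m n : ℤ) (hn : 2 ≤ n)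
    (ω : (ℤ × ℤ) × (ℤ × ℤ) → Prop) :
    ¬ ((∃ p : List (ℤ × ℤ), 2 ≤ p.length ∧
          p.Chain' (fun a b => orEdge m n a b ∧ ω (a, b)) ∧
          (p.zip p.tail).Nodup ∧
          (∃ j : ℤ, p.head? = some (0, j) ∧ 0 ≤ j ∧ j ≤ n) ∧
          (∃ j : ℤ, p.getLast? = some (m, j) ∧ 0 ≤ j ∧ j ≤ n)) ∧
       (∃ q : List (ℤ × ℤ), 2 ≤ q.length ∧
          q.Chain' (fun a b => diagStep a b ∧ dualClosedOr m n ω (a, b)) ∧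
          (q.zip q.tail).Nodup ∧
          (∃ i : ℤ, q.head? = some (i, n) ∧ 0 ≤ i ∧ i ≤ m) ∧
          (∃ i : ℤ, q.getLast? = some (i, 0) ∧ 0 ≤ i ∧ i ≤ m) ∧
          (∀ x ∈ q, 0 ≤ x.1 ∧ x.1 ≤ m ∧ 0 ≤ x.2 ∧ x.2 ≤ n))) := by
  rintro ⟨⟨p, hpl, hpc, -, ⟨j0, hph, hj00, hj0n⟩, ⟨j1, hpt, hj10, hj1n⟩⟩,
          ⟨q, hql, hqc, -, ⟨i0, hqh, hi00, hi0m⟩, ⟨i1, hqt, hi10, hi1m⟩, hqmem⟩⟩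
  set P : ℕ → ℤ × ℤ := fun k => p.getD k (0, 0) with hPdef
  set Q : ℕ → ℤ × ℤ := fun k => q.getD k (0, 0) with hQdef
  have hPget : ∀ k (h : k < p.length), P k = p[k] := fun k h => List.getD_eq_getElem _ _ h
  have hQget : ∀ k (h : k < q.length), Q k = q[k] := fun k h => List.getD_eq_getElem _ _ h
  -- endpoints
  have hph' : P 0 = ((0 : ℤ), j0) := by
    rw [hPget 0 (by omega)]
    have h := List.head?_eq_getElem? (l := p)
    rw [hph, List.getElem?_eq_getElem (by omega)] at h
    exact (Option.some.inj h).symm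
  have hpt' : P (p.length - 1) = (m, j1) := by
    rw [hPget _ (by omega)]
    have h := List.getLast?_eq_getElem? (l := p)
    rw [hpt, List.getElem?_eq_getElem (by omega)] at h
    exact (Option.some.inj h).symm
  have hqh' : Q 0 = (i0, n) := by
    rw [hQget 0 (by omega)]
    have h := List.head?_eq_getElem? (l := q)
    rw [hqh, List.getElem?_eq_getElem (by omega)] at h
    exact (Option.some.inj h).symm
  have hqt' : Q (q.length - 1) = (i1, (0 : ℤ)) := by
    rw [hQget _ (by omega)]
    have h := List.getLast?_eq_getElem? (l := q)
    rw [hqt, List.getElem?_eq_getElem (by omega)] at h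
    exact (Option.some.inj h).symm
  -- indexed chains
  have hpc2 : ∀ i, i < p.length - 1 → orEdge m n (P i) (P (i + 1)) ∧ ω (P i, P (i + 1)) := by
    intro i h
    have h1 : i < p.length := by omega
    have h2 : i + 1 < p.length := by omega
    have := List.isChain_iff_getElem.mp hpc i h2
    rwa [show p[i] = P i from (hPget i h1).symm,
      show p[i + 1] = P (i + 1) from (hPget (i + 1) h2).symm] at this
  have hqc2 : ∀ i, i < q.length - 1 →
      diagStep (Q i) (Q (i + 1)) ∧ dualClosedOr m n ω (Q i, Q (i + 1)) := by
    intro i h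
    have h1 : i < q.length := by omega
    have h2 : i + 1 < q.length := by omega
    have := List.isChain_iff_getElem.mp hqc i h2
    rwa [show q[i] = Q i from (hQget i h1).symm,
      show q[i + 1] = Q (i + 1) from (hQget (i + 1) h2).symm] at this
  -- x-coordinates of p
  have hx : ∀ k, k < p.length → (P k).1 = (k : ℤ) := by
    intro k
    induction k with
    | zero => intro _; rw [hph']; simp
    | succ k ih =>
      intro h
      have h5 := (hpc2 k (by omega)).1.2.2.2.2.1
      rw [ih (by omega)] at h5
      rw [h5]; push_cast; ring
  have hm' : m = (p.length : ℤ) - 1 := by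
    have h := hx (p.length - 1) (by omega)
    rw [hpt'] at h
    simp only at h
    omega
  -- key facts about p
  have key : ∀ i, i < p.length - 1 →
      ((i : ℤ) + (P i).2) % 2 = 1 ∧ 0 ≤ (P i).2 ∧ (P i).2 ≤ n ∧
      ((P (i + 1)).2 = (P i).2 + 1 ∨ (P (i + 1)).2 = (P i).2 - 1) ∧
      0 ≤ (P (i + 1)).2 ∧ (P (i + 1)).2 ≤ n ∧
      ω (((i : ℤ), (P i).2), ((i : ℤ) + 1, (P (i + 1)).2)) := by
    intro i h
    obtain ⟨ho, hω⟩ := hpc2 i h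
    obtain ⟨h1, h2, h3, h4, h5, h6, h7, h8, h9⟩ := ho
    rw [Int.odd_iff, hx i (by omega)] at h1
    have hPi : P i = ((i : ℤ), (P i).2) := Prod.ext (hx i (by omega)) rfl
    have hPi1 : P (i + 1) = ((i : ℤ) + 1, (P (i + 1)).2) := by
      refine Prod.ext ?_ rfl
      rw [hx (i + 1) (by omega)]; push_cast; ring
    rw [hPi, hPi1] at hω
    exact ⟨h1, h3, h4, h7, h8, h9, hω⟩
  -- parity and bounds at every vertex of p
  have hPfact : ∀ k, k ≤ p.length - 1 →
      ((k : ℤ) + (P k).2) % 2 = 1 ∧ 0 ≤ (P k).2 ∧ (P k).2 ≤ n := by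
    intro k hk
    rcases Nat.lt_or_ge k (p.length - 1) with h | h
    · obtain ⟨h1, h2, h3, -⟩ := key k h
      exact ⟨h1, h2, h3⟩
    · have hkk : k = p.length - 1 := by omega
      subst hkk
      obtain ⟨h1, -, -, h4, h5, h6, -⟩ := key (p.length - 2) (by omega)
      have e2 : p.length - 2 + 1 = p.length - 1 := by omega
      rw [e2] at h4 h5 h6
      rcases h4 with h4 | h4 <;> constructor <;> try omega
      all_goals rw [h4]; omega
  -- q vertices: parity even
  have hEv : ∀ t, t < q.length - 1 →
      ((Q t).1 + (Q t).2) % 2 = 0 ∧ ((Q (t + 1)).1 + (Q (t + 1)).2) % 2 = 0 := by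
    intro t h
    obtain ⟨⟨hd1, hd2⟩, e, ho, hc, -⟩ := hqc2 t h
    obtain ⟨h1, -, -, -, hv1, -, hv2, -, -⟩ := ho
    rw [Int.odd_iff] at h1
    obtain ⟨hm1, hm2, hperp⟩ := hc
    dsimp only at hm1 hm2 hperp
    rcases hv2 with h2 | h2 <;> rw [hv1, h2] at hperp <;>
      [simp only [add_sub_cancel_left, one_mul] at hperp;
       simp only [add_sub_cancel_left, sub_sub_cancel_left, one_mul, neg_one_mul] at hperp] <;>
      constructor <;> omega
  have hQpar : ∀ t, t ≤ q.length - 1 → ((Q t).1 + (Q t).2) % 2 = 0 := by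
    intro t ht
    rcases Nat.lt_or_ge t (q.length - 1) with h | h
    · exact (hEv t h).1
    · have htt : t = q.length - 1 := by omega
      subst htt
      have := (hEv (q.length - 2) (by omega)).2
      have e2 : q.length - 2 + 1 = q.length - 1 := by omega
      rwa [e2] at this
  -- q vertices in rectangle
  have hqb : ∀ t, t < q.length →
      0 ≤ (Q t).1 ∧ (Q t).1 ≤ m ∧ 0 ≤ (Q t).2 ∧ (Q t).2 ≤ n := by
    intro t h
    rw [hQget t h]
    exact hqmem _ (List.getElem_mem h)
  -- the height difference along q
  set sf : ℕ → ℤ := fun t => (Q t).2 - (P ((Q t).1.toNat)).2 with hsdef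
  have hsodd : ∀ t, t ≤ q.length - 1 → sf t % 2 = 1 := by
    intro t ht
    have hb := hqb t (by omega)
    have hk : (Q t).1.toNat ≤ p.length - 1 := by omega
    have hp := (hPfact ((Q t).1.toNat) hk).1
    have hq := hQpar t ht
    simp only [hsdef]
    omega
  have hs0 : 0 < sf 0 := by
    have hk : (i0.toNat : ℤ) = i0 := Int.toNat_of_nonneg hi00
    have hp := hPfact i0.toNat (by omega)
    have hq := hQpar 0 (by omega)
    rw [hqh'] at hq
    simp only at hq
    simp only [hsdef, hqh']
    omega
  have hsT : sf (q.length - 1) < 0 := by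
    have hk : (i1.toNat : ℤ) = i1 := Int.toNat_of_nonneg hi10
    have hp := hPfact i1.toNat (by omega)
    have hq := hQpar (q.length - 1) (by omega)
    rw [hqt'] at hq
    simp only at hq
    simp only [hsdef, hqt']
    omega
  obtain ⟨t, ht, h1, h2⟩ := signChange sf (q.length - 1) hs0 hsT
    (fun t ht => by have := hsodd t ht; omega)
  -- the crossing step
  obtain ⟨⟨hd1, hd2⟩, hdc⟩ := hqc2 t ht
  have hbt := hqb t (by omega)
  have hbt1 := hqb (t + 1) (by omega)
  simp only [hsdef] at h1 h2
  obtain ⟨e, ho, hc, hne⟩ := hdc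
  obtain ⟨⟨u1, u2⟩, ⟨v1, v2⟩⟩ := e
  obtain ⟨ho1, -, -, -, hv1, -, hv2, -, -⟩ := ho
  simp only at ho1 hv1 hv2
  obtain ⟨hm1, hm2, hperp⟩ := hc
  simp only at hm1 hm2 hperp
  rcases Int.natAbs_eq_iff.mp hd1 with hxx | hxx
  · -- x' = x + 1 : rightward step
    set k := (Q t).1.toNat with hkdef
    have hk1 : (Q (t + 1)).1.toNat = k + 1 := by omega
    have hkL : k < p.length - 1 := by omega
    obtain ⟨-, -, -, hstep, -, -, hω⟩ := key k hkL
    rw [hk1] at h2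
    have hz : (Q t).2 = (P k).2 + 1 ∧ (Q (t + 1)).2 = (P k).2 ∧
        (P (k + 1)).2 = (P k).2 + 1 := by
      rcases hstep with h | h <;> omega
    obtain ⟨hz1, hz2, hz3⟩ := hz
    have hcomp : u1 = (k : ℤ) ∧ u2 = (P k).2 ∧ v1 = (k : ℤ) + 1 ∧ v2 = (P (k + 1)).2 := by
      rcases hv2 with h | h <;> rw [hv1, h] at hperp <;>
        simp only [add_sub_cancel_left, sub_sub_cancel_left, one_mul, neg_one_mul] at hperp <;>
        omega
    obtain ⟨e1, e2, e3, e4⟩ := hcomp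
    subst e1 e2 e3 e4
    exact hne hω
  · -- x' = x - 1 : leftward step
    set k := (Q (t + 1)).1.toNat with hkdef
    have hk1 : (Q t).1.toNat = k + 1 := by omega
    have hkL : k < p.length - 1 := by omega
    obtain ⟨-, -, -, hstep, -, -, hω⟩ := key k hkL
    rw [hk1] at h1
    have hz : (Q t).2 = (P (k + 1)).2 + 1 ∧ (Q (t + 1)).2 = (P (k + 1)).2 ∧
        (P (k + 1)).2 = (P k).2 - 1 := by
      rcases hstep with h | h <;> omega
    obtain ⟨hz1, hz2, hz3⟩ := hz
    have hcomp : u1 = (k : ℤ) ∧ u2 = (P k).2 ∧ v1 = (k : ℤ) + 1 ∧ v2 = (P (k + 1)).2 := by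
      rcases hv2 with h | h <;> rw [hv1, h] at hperp <;>
        simp only [add_sub_cancel_left, sub_sub_cancel_left, one_mul, neg_one_mul] at hperp <;>
        omega
    obtain ⟨e1, e2, e3, e4⟩ := hcomp
    subst e1 e2 e3 e4
    exact hne hω
end
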